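/- arXiv:1909.09990 — 3 statements merged into one kernel-verified Lean document; each statement's English description precedes it below -/
import Mathlib

section
/- Let U be a real inner product space and V a real vector space with J ∈ End(V), J² = −I. Let α : V × V → U be a symmetric bilinear form and define β(X,Y) = (α(X,Y), α(X,JY)) with values in W = U ⊕ U equipped with ⟨(ξ1,ξ2),(η1,η2)⟩ = ⟨ξ1,η1⟩ − ⟨ξ2,η2⟩. If (ξ, ξ̄) ∈ S(β) ∩ S(β)^⊥, then also (ξ̄, −ξ) ∈ S(β) ∩ S(β)^⊥. -/
open scoped RealInnerProductSpace

/-- If (ξ, ξ') ∈ S(β) ∩ S(β)^⊥ then (ξ', −ξ) ∈ S(β) ∩ S(β)^⊥, where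
β(X,Y) = (α(X,Y), α(X,JY)) and the inner product on U ⊕ U is
⟨(ξ₁,ξ₂),(η₁,η₂)⟩ = ⟨ξ₁,η₁⟩ − ⟨ξ₂,η₂⟩. -/
theorem stmt5 {V U : Type*} [AddCommGroup V] [Module ℝ V]
    [NormedAddCommGroup U] [InnerProductSpace ℝ U]
    (J : V →ₗ[ℝ] V) (hJ : ∀ X : V, J (J X) = -X)
    (α : V →ₗ[ℝ] V →ₗ[ℝ] U) (hα : ∀ X Y : V, α X Y = α Y X)
    (S : Submodule ℝ (U × U))
    (hS : S = Submodule.span ℝ {z : U × U | ∃ X Y : V, z = (α X Y, α X (J Y))})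
    (ξ ξ' : U) (hmem : (ξ, ξ') ∈ S)
    (hperp : ∀ u ∈ S, ⟪ξ, u.1⟫ - ⟪ξ', u.2⟫ = 0) :
    (ξ', -ξ) ∈ S ∧ ∀ u ∈ S, ⟪ξ', u.1⟫ - ⟪-ξ, u.2⟫ = 0 := by
  -- The linear map T(a,b) = (b, -a)
  set T : (U × U) →ₗ[ℝ] (U × U) :=
    { toFun := fun z => (z.2, -z.1)
      map_add' := by intro a b; simp [Prod.ext_iff]; abel
      map_smul' := by intro c a; simp [Prod.ext_iff] } with hT
  have hTS : ∀ z ∈ S, T z ∈ S := by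
    intro z hz
    rw [hS] at hz ⊢
    refine Submodule.span_induction ?_ ?_ ?_ ?_ hz
    · rintro x ⟨X, Y, rfl⟩
      apply Submodule.subset_span
      exact ⟨X, J Y, by simp [hT, hJ]⟩
    · simp
    · intro a b _ _ ha hb
      rw [map_add]; exact Submodule.add_mem _ ha hb
    · intro c a _ ha
      rw [map_smul]; exact Submodule.smul_mem _ c ha
  constructor
  · have := hTS _ hmem
    simpa [hT] using this
  · intro u hu
    have h1 : ((-u.2, u.1) : U × U) ∈ S := by
      have := Submodule.neg_mem S (hTS _ hu)
      simpa [hT] using this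
    have h2 := hperp _ h1
    simp only [inner_neg_right, inner_neg_left] at h2 ⊢
    linarith
end

section
/- In the setting of the previous statement, the subspace U = S(β) ∩ S(β)^⊥ is invariant under the linear map (ξ, ξ̄) ↦ (ξ̄, −ξ), and hence its dimension is even. -/
open scoped RealInnerProductSpace

lemma even_finrank_of_sq_eq_neg_one {M : Type*} [AddCommGroup M] [Module ℝ M]
    [FiniteDimensional ℝ M] (f : M →ₗ[ℝ] M) (hf : ∀ x, f (f x) = -x) :
    Even (Module.finrank ℝ M) := by
  have hf' : (f : Module.End ℝ M) * f = -1 := by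
    ext x; simpa using hf x
  let φ : ℂ →ₐ[ℝ] Module.End ℝ M := Complex.lift ⟨f, hf'⟩
  letI : Module ℂ M := Module.compHom M φ.toRingHom
  have hsmul : ∀ (z : ℂ) (m : M), z • m = φ z m := fun _ _ => rfl
  letI : IsScalarTower ℝ ℂ M := ⟨fun r z m => by
    rw [hsmul, hsmul, map_smul]; rfl⟩
  haveI : FiniteDimensional ℂ M := FiniteDimensional.right ℝ ℂ M
  have := Module.finrank_mul_finrank ℝ ℂ M
  rw [Complex.finrank_real_complex] at this
  exact ⟨Module.finrank ℂ M, by omega⟩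

/-- The subspace 𝒰 = S(β) ∩ S(β)^⊥ is invariant under (ξ,ξ') ↦ (ξ',−ξ)
and hence has even dimension. -/
theorem stmt6 {V U : Type*} [AddCommGroup V] [Module ℝ V]
    [NormedAddCommGroup U] [InnerProductSpace ℝ U] [FiniteDimensional ℝ U]
    (J : V →ₗ[ℝ] V) (hJ : ∀ X : V, J (J X) = -X)
    (α : V →ₗ[ℝ] V →ₗ[ℝ] U) (hα : ∀ X Y : V, α X Y = α Y X)
    (S : Submodule ℝ (U × U))
    (hS : S = Submodule.span ℝ {z : U × U | ∃ X Y : V, z = (α X Y, α X (J Y))})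
    (U₀ : Submodule ℝ (U × U))
    (hU₀ : ∀ z : U × U,
      z ∈ U₀ ↔ z ∈ S ∧ ∀ u ∈ S, ⟪z.1, u.1⟫ - ⟪z.2, u.2⟫ = 0) :
    (∀ z ∈ U₀, ((z.2 : U), -(z.1 : U)) ∈ U₀) ∧
      Even (Module.finrank ℝ U₀) := by
  -- the linear map T
  let T : (U × U) →ₗ[ℝ] (U × U) :=
    LinearMap.prod (LinearMap.snd ℝ U U) (-(LinearMap.fst ℝ U U))
  have hT : ∀ z : U × U, T z = (z.2, -z.1) := fun z => rfl
  -- S is invariant under T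
  have hTS : ∀ u ∈ S, T u ∈ S := by
    intro u hu
    have : Submodule.map T S ≤ S := by
      rw [hS, Submodule.map_span, Submodule.span_le]
      rintro w ⟨z, ⟨X, Y, rfl⟩, rfl⟩
      apply Submodule.subset_span
      refine ⟨X, J Y, ?_⟩
      rw [hT]
      simp [hJ Y]
    exact this ⟨u, hu, rfl⟩
  -- U₀ is invariant under T
  have hTU₀ : ∀ z ∈ U₀, ((z.2 : U), -(z.1 : U)) ∈ U₀ := by
    intro z hz
    rcases (hU₀ z).1 hz with ⟨hzS, hzperp⟩
    refine (hU₀ _).2 ⟨by simpa [hT] using hTS z hzS, ?_⟩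
    intro u hu
    have := hzperp (T u) (hTS u hu)
    rw [hT] at this
    simp only [inner_neg_left, inner_neg_right] at this ⊢
    linarith [this]
  refine ⟨hTU₀, ?_⟩
  -- restrict T to U₀
  have hmap : ∀ z ∈ U₀, T z ∈ U₀ := by
    intro z hz; rw [hT]; exact hTU₀ z hz
  exact even_finrank_of_sq_eq_neg_one (T.restrict hmap) (fun x => by
    ext
    · simp [LinearMap.restrict_apply, hT]
    · simp [LinearMap.restrict_apply, hT])
end

section
/- In a Lorentzian vector space, if u and v are light-like vectors with ⟨u,v⟩ = 0, then u and v are linearly dependent. -/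
open RealInnerProductSpace

/-- The Minkowski bilinear form of signature (n,1) on ℝ^{n+1}. -/
noncomputable def mink (n : ℕ) (x y : Fin (n + 1) → ℝ) : ℝ :=
  (∑ i : Fin n, x i.castSucc * y i.castSucc) - x (Fin.last n) * y (Fin.last n)

/-- Two mutually orthogonal light-like vectors in a Lorentzian space are
linearly dependent. -/
theorem stmt12 {n : ℕ} (u v : Fin (n + 1) → ℝ)
    (hu : mink n u u = 0) (hu0 : u ≠ 0)
    (hv : mink n v v = 0) (hv0 : v ≠ 0)
    (huv : mink n u v = 0) :
    ∃ c : ℝ, v = c • u := by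
  set a := u (Fin.last n) with ha
  set b := v (Fin.last n) with hb
  set u' : EuclideanSpace ℝ (Fin n) := WithLp.toLp 2 (fun i : Fin n => u i.castSucc) with hu'
  set v' : EuclideanSpace ℝ (Fin n) := WithLp.toLp 2 (fun i : Fin n => v i.castSucc) with hv'
  have iuu : ⟪u', u'⟫ = a * a := by
    simp only [PiLp.inner_apply, RCLike.inner_apply, conj_trivial]
    have := hu; unfold mink at this; linarith
  have ivv : ⟪v', v'⟫ = b * b := by
    simp only [PiLp.inner_apply, RCLike.inner_apply, conj_trivial]
    have := hv; unfold mink at this; linarith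
  have iuv : ⟪u', v'⟫ = a * b := by
    simp only [PiLp.inner_apply, RCLike.inner_apply, conj_trivial]
    rw [Finset.sum_congr rfl fun x _ => mul_comm (v'.ofLp x) (u'.ofLp x)]
    have := huv; unfold mink at this; linarith
  have key : ∀ (w : Fin (n + 1) → ℝ) (w' : EuclideanSpace ℝ (Fin n)),
      w' = WithLp.toLp 2 (fun i : Fin n => w i.castSucc) → w ≠ 0 → w (Fin.last n) = 0 →
      ⟪w', w'⟫ = w (Fin.last n) * w (Fin.last n) → False := by
    intro w w' hw' hw0 hlast hinner
    apply hw0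
    have hz : w' = 0 := by
      rw [← inner_self_eq_zero (𝕜 := ℝ)]
      rw [hinner, hlast]; ring
    funext i
    refine Fin.lastCases hlast (fun j => ?_) i
    have := congrArg (fun x : EuclideanSpace ℝ (Fin n) => x j) hz
    simpa [hw'] using this
  have hA : a ≠ 0 := fun h => key u u' hu' hu0 h (by rw [iuu, ← ha])
  have hB : b ≠ 0 := fun h => key v v' hv' hv0 h (by rw [ivv, ← hb])
  have hnu : ‖u'‖ = |a| := by
    have h1 : ‖u'‖ * ‖u'‖ = |a| * |a| := by
      rw [← real_inner_self_eq_norm_mul_norm, iuu, abs_mul_abs_self]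
    nlinarith [norm_nonneg u', abs_nonneg a]
  have hnv : ‖v'‖ = |b| := by
    have h1 : ‖v'‖ * ‖v'‖ = |b| * |b| := by
      rw [← real_inner_self_eq_norm_mul_norm, ivv, abs_mul_abs_self]
    nlinarith [norm_nonneg v', abs_nonneg b]
  have hu'0 : u' ≠ 0 := by
    intro h; apply hA
    have : ‖u'‖ = 0 := by rw [h, norm_zero]
    rw [hnu] at this; exact abs_eq_zero.mp this
  have hv'0 : v' ≠ 0 := by
    intro h; apply hB
    have : ‖v'‖ = 0 := by rw [h, norm_zero]
    rw [hnv] at this; exact abs_eq_zero.mp this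
  have hcs : ‖⟪u', v'⟫‖ = ‖u'‖ * ‖v'‖ := by
    rw [iuv, hnu, hnv, Real.norm_eq_abs, abs_mul]
  obtain ⟨r, hr0, hrv⟩ := (norm_inner_eq_norm_iff hu'0 hv'0).mp hcs
  have hrab : a * b = r * (a * a) := by
    have : ⟪u', v'⟫ = r * ⟪u', u'⟫ := by
      rw [hrv, real_inner_smul_right]
    rw [iuv, iuu] at this; exact this
  have hbra : b = r * a := by
    have h2 : a * b = a * (r * a) := by ring_nf; linarith [hrab]
    exact mul_left_cancel₀ hA h2
  refine ⟨r, funext fun i => ?_⟩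
  refine Fin.lastCases ?_ (fun j => ?_) i
  · simpa [← ha, ← hb] using hbra
  · have := congrArg (fun x : EuclideanSpace ℝ (Fin n) => x j) hrv
    simpa [hu', hv'] using this
end
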